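/- If a twice-differentiable function L : ℝ^d → ℝ satisfies vᵀ∇²L(θ)v ≥ β·‖v‖²_Σ for all θ, v (where ‖v‖²_Σ = vᵀΣv for a PSD matrix Σ), and θ̂ minimizes L while θ* is another point with L(θ̂) ≤ L(θ*), then β·‖θ̂ − θ*‖²_Σ ≤ ‖∇L(θ*)‖_{Σ^{-1}}·‖θ̂ − θ*‖_Σ, hence ‖θ̂ − θ*‖_Σ ≤ (1/β)·‖∇L(θ*)‖_{Σ^{-1}}. -/

import Mathlib

open Matrix

theorem stmt_12 (d : ℕ) (L : (Fin d → ℝ) → ℝ) (hL : ContDiff ℝ 2 L)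
    (S : Matrix (Fin d) (Fin d) ℝ) (hS : S.PosDef) (β : ℝ) (hβ : 0 < β)
    (hHess : ∀ (θ v : Fin d → ℝ),
      β * (v ⬝ᵥ S.mulVec v) ≤ iteratedFDeriv ℝ 2 L θ ![v, v])
    (g θhat θstar : Fin d → ℝ)
    (hg : ∀ v : Fin d → ℝ, fderiv ℝ L θstar v = g ⬝ᵥ v)
    (hmin : ∀ θ, L θhat ≤ L θ) (hle : L θhat ≤ L θstar) :
    β * ((θhat - θstar) ⬝ᵥ S.mulVec (θhat - θstar)) ≤
      Real.sqrt (g ⬝ᵥ S⁻¹.mulVec g) *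
        Real.sqrt ((θhat - θstar) ⬝ᵥ S.mulVec (θhat - θstar)) ∧
    Real.sqrt ((θhat - θstar) ⬝ᵥ S.mulVec (θhat - θstar)) ≤
      (1 / β) * Real.sqrt (g ⬝ᵥ S⁻¹.mulVec g) := by
  set Δ : Fin d → ℝ := θhat - θstar with hΔdef
  set Q : ℝ := Δ ⬝ᵥ S.mulVec Δ with hQdef
  set C : ℝ := g ⬝ᵥ S⁻¹.mulVec g with hCdef
  have hSt : Sᵀ = S := by simpa using hS.isHermitian.eq
  have hdet : IsUnit S.det := isUnit_iff_ne_zero.mpr hS.det_pos.ne'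
  have hQ0 : 0 ≤ Q := by simpa using hS.posSemidef.dotProduct_mulVec_nonneg Δ
  have hC0 : 0 ≤ C := by simpa using hS.inv.posSemidef.dotProduct_mulVec_nonneg g
  -- Cauchy-Schwarz: (g ⬝ᵥ Δ)^2 ≤ C * Q
  set u : Fin d → ℝ := S⁻¹.mulVec g with hudef
  have hu1 : S.mulVec u = g := by
    rw [hudef, Matrix.mulVec_mulVec, Matrix.mul_nonsing_inv S hdet, Matrix.one_mulVec]
  have huS : u ᵥ* S = g := by
    rw [← hSt, Matrix.vecMul_transpose, hu1]
  have hDu : Δ ⬝ᵥ S.mulVec u = g ⬝ᵥ Δ := by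
    rw [hu1, dotProduct_comm]
  have huD : u ⬝ᵥ S.mulVec Δ = g ⬝ᵥ Δ := by
    rw [Matrix.dotProduct_mulVec, huS]
  have huu : u ⬝ᵥ S.mulVec u = C := by
    rw [hu1, dotProduct_comm, hCdef, hudef]
  have hCS : (g ⬝ᵥ Δ) ^ 2 ≤ C * Q := by
    have hquad : ∀ x : ℝ, 0 ≤ Q * (x * x) + (2 * (g ⬝ᵥ Δ)) * x + C := by
      intro x
      have h : 0 ≤ (x • Δ + u) ⬝ᵥ S.mulVec (x • Δ + u) := by
        simpa using hS.posSemidef.dotProduct_mulVec_nonneg (x • Δ + u)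
      have hexp : (x • Δ + u) ⬝ᵥ S.mulVec (x • Δ + u)
          = Q * (x * x) + (2 * (g ⬝ᵥ Δ)) * x + C := by
        rw [Matrix.mulVec_add, Matrix.mulVec_smul, add_dotProduct, dotProduct_add,
          dotProduct_add, smul_dotProduct, smul_dotProduct, dotProduct_smul,
          dotProduct_smul, hDu, huD, huu, smul_eq_mul, smul_eq_mul, smul_eq_mul]
        ring
      linarith [hexp ▸ h]
    have hdis := discrim_le_zero hquad
    rw [discrim] at hdis
    nlinarith
  -- gradient inequality: β * Q ≤ -(g ⬝ᵥ Δ)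
  have hF : ContDiff ℝ 1 (fderiv ℝ L) := hL.fderiv_right (by norm_num)
  set c : ℝ → (Fin d → ℝ) := fun t => θstar + t • Δ with hcdef
  have hc' : ∀ t : ℝ, HasDerivAt c Δ t := by
    intro t
    have : HasDerivAt (fun x : ℝ => x • Δ) ((1:ℝ) • Δ) t := (hasDerivAt_id t).smul_const Δ
    rw [one_smul] at this
    exact this.const_add θstar
  set φ' : ℝ → ℝ := fun t => fderiv ℝ L (c t) Δ with hφdef
  have hφ'' : ∀ t : ℝ, HasDerivAt φ' (iteratedFDeriv ℝ 2 L (c t) ![Δ, Δ]) t := by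
    intro t
    have h1 : HasFDerivAt (fderiv ℝ L) (fderiv ℝ (fderiv ℝ L) (c t)) (c t) :=
      ((hF.differentiable one_ne_zero) (c t)).hasFDerivAt
    have h2 := h1.comp_hasDerivAt t (hc' t)
    have h3 := ((ContinuousLinearMap.apply ℝ ℝ Δ).hasFDerivAt).comp_hasDerivAt t h2
    have : iteratedFDeriv ℝ 2 L (c t) ![Δ, Δ] = fderiv ℝ (fderiv ℝ L) (c t) Δ Δ := by
      rw [iteratedFDeriv_two_apply]; simp
    rw [this]
    exact h3
  set h : ℝ → ℝ := fun t => φ' t - β * Q * t with hhdef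
  have hh : ∀ t : ℝ, HasDerivAt h (iteratedFDeriv ℝ 2 L (c t) ![Δ, Δ] - β * Q) t := by
    intro t
    have hlin : HasDerivAt (fun x : ℝ => β * Q * x) (β * Q) t := by
      simpa using (hasDerivAt_id t).const_mul (β * Q)
    exact (hφ'' t).sub hlin
  have hmono : Monotone h := by
    apply monotone_of_deriv_nonneg
    · exact fun t => (hh t).differentiableAt
    · intro t
      rw [(hh t).deriv]
      linarith [hHess (c t) Δ]
  have h01 : h 0 ≤ h 1 := hmono (by norm_num)
  have hc0 : c 0 = θstar := by simp [hcdef]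
  have hc1 : c 1 = θhat := by
    simp only [hcdef, one_smul, hΔdef]
    abel
  have hφ0 : φ' 0 = g ⬝ᵥ Δ := by rw [hφdef]; simp only [hc0]; exact hg Δ
  have hφ1 : φ' 1 = 0 := by
    have hloc : IsLocalMin L θhat := Filter.Eventually.of_forall hmin
    rw [hφdef]
    simp only [hc1, hloc.fderiv_eq_zero]
    rfl
  have hgrad : β * Q ≤ -(g ⬝ᵥ Δ) := by
    simp only [hhdef, hφ0, hφ1] at h01
    linarith
  -- combine
  have habs : -(g ⬝ᵥ Δ) ≤ Real.sqrt C * Real.sqrt Q := by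
    have h1 : -(g ⬝ᵥ Δ) ≤ |g ⬝ᵥ Δ| := neg_le_abs _
    have h2 : |g ⬝ᵥ Δ| = Real.sqrt ((g ⬝ᵥ Δ) ^ 2) := (Real.sqrt_sq_eq_abs _).symm
    have h3 : Real.sqrt ((g ⬝ᵥ Δ) ^ 2) ≤ Real.sqrt (C * Q) := Real.sqrt_le_sqrt hCS
    rw [Real.sqrt_mul hC0] at h3
    linarith [h2 ▸ h1]
  have hmain : β * Q ≤ Real.sqrt C * Real.sqrt Q := le_trans hgrad habs
  refine ⟨hmain, ?_⟩
  rcases eq_or_lt_of_le hQ0 with hQz | hQp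
  · rw [← hQz, Real.sqrt_zero]
    positivity
  · have hsQ : 0 < Real.sqrt Q := Real.sqrt_pos.mpr hQp
    have key : β * (Real.sqrt Q * Real.sqrt Q) ≤ Real.sqrt C * Real.sqrt Q := by
      rw [Real.mul_self_sqrt hQ0]; exact hmain
    have hb : β * Real.sqrt Q ≤ Real.sqrt C := by nlinarith [key, hsQ]
    rw [div_mul_eq_mul_div, le_div_iff₀ hβ, one_mul]
    linarith
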